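/- Let φ = (1+√5)/2, let 2 < β < 2φ, and let T : ℝ → ℝ be defined by T(x) = x + 2 if x ≤ 0 and T(x) = β − φ·x if x > 0. Set A = 1/(βφ − 2(β + φ − 4)) and let μ be the measure on ℝ with density ρ with respect to Lebesgue measure, where ρ(x) = A/φ² for x ∈ (β(1−φ), β−2φ), ρ(x) = A for x ∈ (β−2φ, β(1−φ)+2), ρ(x) = A for x ∈ (β(1−φ)+2, β−2φ+2), ρ(x) = φ·A for x ∈ (β−2φ+2, 2), ρ(x) = A/φ for x ∈ (2, β), and ρ(x) = 0 otherwise. Then μ is a probability measure, μ is T-invariant, and μ([0, β]) = 2(3−φ)·A. -/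

import Mathlib

open MeasureTheory Set

noncomputable def affEq (a b : ℝ) (ha : a ≠ 0) : ℝ ≃ᵐ ℝ where
  toFun x := b - a * x
  invFun y := (b - y) / a
  left_inv x := by field_simp; ring
  right_inv y := by field_simp; ring
  measurable_toFun := by show Measurable fun x : ℝ => b - a * x; fun_prop
  measurable_invFun := by show Measurable fun y : ℝ => (b - y) / a; fun_prop

lemma affEq_apply (a b : ℝ) (ha : a ≠ 0) (x : ℝ) : affEq a b ha x = b - a * x := rfl

lemma affEq_symm_apply (a b : ℝ) (ha : a ≠ 0) (y : ℝ) : (affEq a b ha).symm y = (b - y) / a := rfl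

lemma map_volume_affEq (a b : ℝ) (ha : a ≠ 0) :
    volume.map (affEq a b ha) = ENNReal.ofReal |a|⁻¹ • volume := by
  have h : (⇑(affEq a b ha) : ℝ → ℝ) = (fun y => b + y) ∘ (fun x => (-a) * x) := by
    funext x; simp [affEq_apply]; ring
  rw [h, ← Measure.map_map (by fun_prop) (by fun_prop),
    Real.map_volume_mul_left (neg_ne_zero.2 ha), Measure.map_smul,
    map_add_left_eq_self volume b]
  congr 2
  rw [abs_inv, abs_neg]

lemma map_withDensity_equiv (e : ℝ ≃ᵐ ℝ) (g : ℝ → ENNReal) (hg : Measurable g) (ν : Measure ℝ) :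
    (ν.withDensity (g ∘ e)).map e = (ν.map e).withDensity g := by
  ext s hs
  rw [Measure.map_apply e.measurable hs, withDensity_apply _ (e.measurable hs),
    withDensity_apply _ hs, setLIntegral_map hs hg e.measurable]
  rfl

set_option maxHeartbeats 2000000 in
theorem invariant_density_s_phi_before_plateau (φ β A : ℝ) (hφ : φ = (1 + Real.sqrt 5) / 2)
    (hβ₁ : 2 < β) (hβ₂ : β < 2 * φ) (hA : A = 1 / (β * φ - 2 * (β + φ - 4)))
    (T : ℝ → ℝ) (hT : T = fun x => if x ≤ 0 then x + 2 else β - φ * x)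
    (ρ : ℝ → ENNReal)
    (hρ : ρ = fun x =>
      if x ∈ Ioo (β * (1 - φ)) (β - 2 * φ) then ENNReal.ofReal (A / φ ^ 2)
      else if x ∈ Ioo (β - 2 * φ) (β * (1 - φ) + 2) then ENNReal.ofReal A
      else if x ∈ Ioo (β * (1 - φ) + 2) (β - 2 * φ + 2) then ENNReal.ofReal A
      else if x ∈ Ioo (β - 2 * φ + 2) 2 then ENNReal.ofReal (φ * A)
      else if x ∈ Ioo (2 : ℝ) β then ENNReal.ofReal (A / φ)
      else 0)
    (μ : Measure ℝ) (hμ : μ = volume.withDensity ρ) :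
    IsProbabilityMeasure μ ∧ μ.map T = μ ∧
      μ (Icc (0 : ℝ) β) = ENNReal.ofReal (2 * (3 - φ) * A) := by
  -- basic facts about φ
  have h5 : Real.sqrt 5 ^ 2 = 5 := Real.sq_sqrt (by norm_num)
  have h5a : Real.sqrt 5 > 2.2 := by nlinarith [Real.sqrt_nonneg 5]
  have h5b : Real.sqrt 5 < 2.3 := by nlinarith [Real.sqrt_nonneg 5]
  have hφ2 : φ ^ 2 = φ + 1 := by rw [hφ]; nlinarith
  have hφa : (1.6:ℝ) < φ := by rw [hφ]; nlinarith
  have hφb : φ < 1.7 := by rw [hφ]; nlinarith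
  have hφ0 : (0:ℝ) < φ := by linarith
  have hφne : φ ≠ 0 := ne_of_gt hφ0
  have hbφ2 : β * φ ^ 2 = β * φ + β := by rw [hφ2]; ring
  have hp1 : 2 * φ < β * φ := by nlinarith
  have hp2 : β * φ < 2 * φ + 2 := by nlinarith
  have hD : 0 < β * φ - 2 * (β + φ - 4) := by nlinarith
  have hA0 : 0 < A := by rw [hA]; positivity
  have hAD : A * (β * φ - 2 * (β + φ - 4)) = 1 := by rw [hA]; field_simp
  have hfe1 : A / φ ^ 2 = A * (2 - φ) := by
    rw [div_eq_iff (pow_ne_zero 2 hφne)]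
    linear_combination (A * φ - A) * hφ2
  have hfe2 : A / φ = A * (φ - 1) := by
    rw [div_eq_iff hφne]
    linear_combination (-A) * hφ2
  -- ordering of breakpoints
  have ho1 : β * (1 - φ) < β - 2 * φ := by nlinarith
  have ho2 : β - 2 * φ < 0 := by linarith
  have ho2' : (-2:ℝ) < β - 2 * φ := by linarith
  have ho3 : (0:ℝ) < β * (1 - φ) + 2 := by nlinarith
  have ho3' : β * (1 - φ) < 0 := by nlinarith
  have ho4 : β * (1 - φ) + 2 < β - 2 * φ + 2 := by linarith
  have ho5 : β - 2 * φ + 2 < 2 := by linarith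
  have ho6 : (2:ℝ) < β := hβ₁
  -- measurability
  have hρm : Measurable ρ := by
    rw [hρ]
    refine Measurable.ite ?_ measurable_const ?_
    · exact measurableSet_Ioo
    refine Measurable.ite ?_ measurable_const ?_
    · exact measurableSet_Ioo
    refine Measurable.ite ?_ measurable_const ?_
    · exact measurableSet_Ioo
    refine Measurable.ite ?_ measurable_const ?_
    · exact measurableSet_Ioo
    exact Measurable.ite measurableSet_Ioo measurable_const measurable_const
  have hTm : Measurable T := by
    rw [hT]
    exact Measurable.ite measurableSet_Iic (by fun_prop) (by fun_prop)
  set ρL := (Iic (0:ℝ)).indicator ρ with hρLdef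
  set ρR := (Ioi (0:ℝ)).indicator ρ with hρRdef
  have hLm : Measurable ρL := hρm.indicator measurableSet_Iic
  have hRm : Measurable ρR := hρm.indicator measurableSet_Ioi
  have hgLm : Measurable (fun y : ℝ => ρL (y - 2)) := hLm.comp (by fun_prop)
  have hgRm : Measurable (fun y : ℝ => ρR ((β - y) / φ)) := hRm.comp (by fun_prop)
  -- value lemmas for ρ
  have hv1 : ∀ y : ℝ, β * (1 - φ) < y → y < β - 2 * φ → ρ y = ENNReal.ofReal (A / φ ^ 2) := by
    intro y u v; simp only [hρ, mem_Ioo]; exact if_pos ⟨u, v⟩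
  have hv2 : ∀ y : ℝ, β - 2 * φ < y → y < β * (1 - φ) + 2 → ρ y = ENNReal.ofReal A := by
    intro y u v; simp only [hρ, mem_Ioo]
    rw [if_neg (by rintro ⟨c1, c2⟩; linarith), if_pos (⟨u, v⟩ : _ ∧ _)]
  have hv3 : ∀ y : ℝ, β * (1 - φ) + 2 < y → y < β - 2 * φ + 2 → ρ y = ENNReal.ofReal A := by
    intro y u v; simp only [hρ, mem_Ioo]
    rw [if_neg (by rintro ⟨c1, c2⟩; linarith), if_neg (by rintro ⟨c1, c2⟩; linarith),
      if_pos (⟨u, v⟩ : _ ∧ _)]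
  have hv4 : ∀ y : ℝ, β - 2 * φ + 2 < y → y < 2 → ρ y = ENNReal.ofReal (φ * A) := by
    intro y u v; simp only [hρ, mem_Ioo]
    rw [if_neg (by rintro ⟨c1, c2⟩; linarith), if_neg (by rintro ⟨c1, c2⟩; linarith),
      if_neg (by rintro ⟨c1, c2⟩; linarith), if_pos (⟨u, v⟩ : _ ∧ _)]
  have hv5 : ∀ y : ℝ, 2 < y → y < β → ρ y = ENNReal.ofReal (A / φ) := by
    intro y u v; simp only [hρ, mem_Ioo]
    rw [if_neg (by rintro ⟨c1, c2⟩; linarith), if_neg (by rintro ⟨c1, c2⟩; linarith),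
      if_neg (by rintro ⟨c1, c2⟩; linarith), if_neg (by rintro ⟨c1, c2⟩; linarith),
      if_pos (⟨u, v⟩ : _ ∧ _)]
  have hv0a : ∀ y : ℝ, y ≤ β * (1 - φ) → ρ y = 0 := by
    intro y u; simp only [hρ, mem_Ioo]
    rw [if_neg (by rintro ⟨c1, c2⟩; linarith), if_neg (by rintro ⟨c1, c2⟩; linarith),
      if_neg (by rintro ⟨c1, c2⟩; linarith), if_neg (by rintro ⟨c1, c2⟩; linarith),
      if_neg (by rintro ⟨c1, c2⟩; linarith)]
  have hv0b : ∀ y : ℝ, β ≤ y → ρ y = 0 := by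
    intro y u; simp only [hρ, mem_Ioo]
    rw [if_neg (by rintro ⟨c1, c2⟩; linarith), if_neg (by rintro ⟨c1, c2⟩; linarith),
      if_neg (by rintro ⟨c1, c2⟩; linarith), if_neg (by rintro ⟨c1, c2⟩; linarith),
      if_neg (by rintro ⟨c1, c2⟩; linarith)]
  have hLv : ∀ z : ℝ, z ≤ 0 → ρL z = ρ z := fun z hz => indicator_of_mem (mem_Iic.2 hz) ρ
  have hLv' : ∀ z : ℝ, 0 < z → ρL z = 0 := fun z hz =>
    indicator_of_notMem (by simpa using not_le.2 hz) ρ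
  have hRv : ∀ z : ℝ, 0 < z → ρR z = ρ z := fun z hz => indicator_of_mem (mem_Ioi.2 hz) ρ
  have hRv' : ∀ z : ℝ, z ≤ 0 → ρR z = 0 := fun z hz =>
    indicator_of_notMem (by simpa using hz) ρ
  have hiv : φ⁻¹ = φ - 1 := by
    rw [inv_eq_one_div, div_eq_iff hφne]
    linear_combination (-1 : ℝ) * hφ2
  -- ρ as a sum of indicator functions
  have nm : ∀ {a b z : ℝ}, (z ≤ a ∨ b ≤ z) → z ∉ Ioo a b := by
    intro a b z h hm
    rw [mem_Ioo] at hm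
    rcases h with h | h <;> linarith [hm.1, hm.2]
  have hρeq : ρ = fun x =>
      (Ioo (β * (1 - φ)) (β - 2 * φ)).indicator (fun _ => ENNReal.ofReal (A / φ ^ 2)) x
      + (Ioo (β - 2 * φ) (β * (1 - φ) + 2)).indicator (fun _ => ENNReal.ofReal A) x
      + (Ioo (β * (1 - φ) + 2) (β - 2 * φ + 2)).indicator (fun _ => ENNReal.ofReal A) x
      + (Ioo (β - 2 * φ + 2) 2).indicator (fun _ => ENNReal.ofReal (φ * A)) x
      + (Ioo (2:ℝ) β).indicator (fun _ => ENNReal.ofReal (A / φ)) x := by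
    funext x
    by_cases h1 : x ∈ Ioo (β * (1 - φ)) (β - 2 * φ)
    · have h1' := mem_Ioo.1 h1
      have n2 : x ∉ Ioo (β - 2 * φ) (β * (1 - φ) + 2) := nm (Or.inl h1'.2.le)
      have n3 : x ∉ Ioo (β * (1 - φ) + 2) (β - 2 * φ + 2) := nm (Or.inl (by linarith [h1'.2]))
      have n4 : x ∉ Ioo (β - 2 * φ + 2) 2 := nm (Or.inl (by linarith [h1'.2]))
      have n5 : x ∉ Ioo (2:ℝ) β := nm (Or.inl (by linarith [h1'.2]))
      simp only [hρ]
      rw [if_pos h1, indicator_of_mem h1, indicator_of_notMem n2, indicator_of_notMem n3,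
        indicator_of_notMem n4, indicator_of_notMem n5]
      simp
    · by_cases h2 : x ∈ Ioo (β - 2 * φ) (β * (1 - φ) + 2)
      · have h2' := mem_Ioo.1 h2
        have n3 : x ∉ Ioo (β * (1 - φ) + 2) (β - 2 * φ + 2) := nm (Or.inl h2'.2.le)
        have n4 : x ∉ Ioo (β - 2 * φ + 2) 2 := nm (Or.inl (by linarith [h2'.2]))
        have n5 : x ∉ Ioo (2:ℝ) β := nm (Or.inl (by linarith [h2'.2]))
        simp only [hρ]
        rw [if_neg h1, if_pos h2, indicator_of_notMem h1, indicator_of_mem h2,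
          indicator_of_notMem n3, indicator_of_notMem n4, indicator_of_notMem n5]
        simp
      · by_cases h3 : x ∈ Ioo (β * (1 - φ) + 2) (β - 2 * φ + 2)
        · have h3' := mem_Ioo.1 h3
          have n4 : x ∉ Ioo (β - 2 * φ + 2) 2 := nm (Or.inl h3'.2.le)
          have n5 : x ∉ Ioo (2:ℝ) β := nm (Or.inl (by linarith [h3'.2]))
          simp only [hρ]
          rw [if_neg h1, if_neg h2, if_pos h3, indicator_of_notMem h1, indicator_of_notMem h2,
            indicator_of_mem h3, indicator_of_notMem n4, indicator_of_notMem n5]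
          simp
        · by_cases h4 : x ∈ Ioo (β - 2 * φ + 2) 2
          · have h4' := mem_Ioo.1 h4
            have n5 : x ∉ Ioo (2:ℝ) β := nm (Or.inl h4'.2.le)
            simp only [hρ]
            rw [if_neg h1, if_neg h2, if_neg h3, if_pos h4, indicator_of_notMem h1,
              indicator_of_notMem h2, indicator_of_notMem h3, indicator_of_mem h4,
              indicator_of_notMem n5]
            simp
          · by_cases h5 : x ∈ Ioo (2:ℝ) β
            · simp only [hρ]
              rw [if_neg h1, if_neg h2, if_neg h3, if_neg h4, if_pos h5,
                indicator_of_notMem h1, indicator_of_notMem h2, indicator_of_notMem h3,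
                indicator_of_notMem h4, indicator_of_mem h5]
              simp
            · simp only [hρ]
              rw [if_neg h1, if_neg h2, if_neg h3, if_neg h4, if_neg h5,
                indicator_of_notMem h1, indicator_of_notMem h2, indicator_of_notMem h3,
                indicator_of_notMem h4, indicator_of_notMem h5]
              simp
  -- measure of any measurable set
  have hm1 : Measurable fun x : ℝ =>
      (Ioo (β * (1 - φ)) (β - 2 * φ)).indicator (fun _ => ENNReal.ofReal (A / φ ^ 2)) x :=
    measurable_const.indicator measurableSet_Ioo
  have hm2 : Measurable fun x : ℝ =>
      (Ioo (β - 2 * φ) (β * (1 - φ) + 2)).indicator (fun _ => ENNReal.ofReal A) x :=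
    measurable_const.indicator measurableSet_Ioo
  have hm3 : Measurable fun x : ℝ =>
      (Ioo (β * (1 - φ) + 2) (β - 2 * φ + 2)).indicator (fun _ => ENNReal.ofReal A) x :=
    measurable_const.indicator measurableSet_Ioo
  have hm4 : Measurable fun x : ℝ =>
      (Ioo (β - 2 * φ + 2) 2).indicator (fun _ => ENNReal.ofReal (φ * A)) x :=
    measurable_const.indicator measurableSet_Ioo
  have hcalc : ∀ s : Set ℝ, MeasurableSet s →
      (volume.withDensity ρ) s =
        ENNReal.ofReal (A / φ ^ 2) * volume (Ioo (β * (1 - φ)) (β - 2 * φ) ∩ s)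
        + ENNReal.ofReal A * volume (Ioo (β - 2 * φ) (β * (1 - φ) + 2) ∩ s)
        + ENNReal.ofReal A * volume (Ioo (β * (1 - φ) + 2) (β - 2 * φ + 2) ∩ s)
        + ENNReal.ofReal (φ * A) * volume (Ioo (β - 2 * φ + 2) 2 ∩ s)
        + ENNReal.ofReal (A / φ) * volume (Ioo (2:ℝ) β ∩ s) := by
    intro s hs
    rw [withDensity_apply _ hs, hρeq]
    beta_reduce
    rw [lintegral_add_left (show Measurable fun x : ℝ => (Ioo (β * (1 - φ)) (β - 2 * φ)).indicator (fun _ => ENNReal.ofReal (A / φ ^ 2)) x + (Ioo (β - 2 * φ) (β * (1 - φ) + 2)).indicator (fun _ => ENNReal.ofReal A) x + (Ioo (β * (1 - φ) + 2) (β - 2 * φ + 2)).indicator (fun _ => ENNReal.ofReal A) x + (Ioo (β - 2 * φ + 2) 2).indicator (fun _ => ENNReal.ofReal (φ * A)) x from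
        ((hm1.add hm2).add hm3).add hm4),
      lintegral_add_left (show Measurable fun x : ℝ => (Ioo (β * (1 - φ)) (β - 2 * φ)).indicator (fun _ => ENNReal.ofReal (A / φ ^ 2)) x + (Ioo (β - 2 * φ) (β * (1 - φ) + 2)).indicator (fun _ => ENNReal.ofReal A) x + (Ioo (β * (1 - φ) + 2) (β - 2 * φ + 2)).indicator (fun _ => ENNReal.ofReal A) x from
        (hm1.add hm2).add hm3),
      lintegral_add_left (show Measurable fun x : ℝ => (Ioo (β * (1 - φ)) (β - 2 * φ)).indicator (fun _ => ENNReal.ofReal (A / φ ^ 2)) x + (Ioo (β - 2 * φ) (β * (1 - φ) + 2)).indicator (fun _ => ENNReal.ofReal A) x from hm1.add hm2),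
      lintegral_add_left hm1]
    rw [lintegral_indicator measurableSet_Ioo, lintegral_indicator measurableSet_Ioo,
      lintegral_indicator measurableSet_Ioo, lintegral_indicator measurableSet_Ioo,
      lintegral_indicator measurableSet_Ioo]
    simp only [setLIntegral_const, Measure.restrict_apply measurableSet_Ioo]
  -- total mass one
  have huniv : (volume.withDensity ρ) univ = 1 := by
    rw [hcalc univ MeasurableSet.univ]
    simp only [inter_univ, Real.volume_Ioo]
    rw [hfe1, hfe2]
    have l1 : (0:ℝ) ≤ A * (2 - φ) * (β - 2 * φ - β * (1 - φ)) :=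
      mul_nonneg (by nlinarith) (by linarith)
    have l2 : (0:ℝ) ≤ A * (β * (1 - φ) + 2 - (β - 2 * φ)) := mul_nonneg hA0.le (by linarith)
    have l3 : (0:ℝ) ≤ A * (β - 2 * φ + 2 - (β * (1 - φ) + 2)) := mul_nonneg hA0.le (by linarith)
    have l4 : (0:ℝ) ≤ φ * A * (2 - (β - 2 * φ + 2)) :=
      mul_nonneg (by positivity) (by linarith)
    have l5 : (0:ℝ) ≤ A * (φ - 1) * (β - 2) := mul_nonneg (by nlinarith) (by linarith)
    rw [← ENNReal.ofReal_mul (by nlinarith : (0:ℝ) ≤ A * (2 - φ)),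
      ← ENNReal.ofReal_mul hA0.le, ← ENNReal.ofReal_mul hA0.le,
      ← ENNReal.ofReal_mul (by positivity : (0:ℝ) ≤ φ * A),
      ← ENNReal.ofReal_mul (by nlinarith : (0:ℝ) ≤ A * (φ - 1)),
      ← ENNReal.ofReal_add l1 l2, ← ENNReal.ofReal_add (add_nonneg l1 l2) l3,
      ← ENNReal.ofReal_add (add_nonneg (add_nonneg l1 l2) l3) l4,
      ← ENNReal.ofReal_add (add_nonneg (add_nonneg (add_nonneg l1 l2) l3) l4) l5,
      ← ENNReal.ofReal_one]
    congr 1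
    linear_combination (4 * A - A * β) * hφ2 + hAD
  -- measure of [0, β]
  have hIcc : (volume.withDensity ρ) (Icc 0 β) = ENNReal.ofReal (2 * (3 - φ) * A) := by
    rw [hcalc _ measurableSet_Icc]
    have i1 : Ioo (β * (1 - φ)) (β - 2 * φ) ∩ Icc 0 β = ∅ := by
      rw [eq_empty_iff_forall_notMem]
      rintro z ⟨hz1, hz2⟩
      rw [mem_Ioo] at hz1; rw [mem_Icc] at hz2
      linarith [hz1.2, hz2.1]
    have i2 : Ioo (β - 2 * φ) (β * (1 - φ) + 2) ∩ Icc 0 β = Ico 0 (β * (1 - φ) + 2) := by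
      ext z
      simp only [mem_inter_iff, mem_Ioo, mem_Icc, mem_Ico]
      constructor
      · rintro ⟨⟨u1, u2⟩, v1, v2⟩; exact ⟨v1, u2⟩
      · rintro ⟨u1, u2⟩; exact ⟨⟨by linarith, u2⟩, u1, by linarith⟩
    have i3 : Ioo (β * (1 - φ) + 2) (β - 2 * φ + 2) ∩ Icc 0 β =
        Ioo (β * (1 - φ) + 2) (β - 2 * φ + 2) := by
      rw [inter_eq_left]
      intro z hz
      rw [mem_Ioo] at hz
      rw [mem_Icc]
      exact ⟨by linarith [hz.1], by linarith [hz.2]⟩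
    have i4 : Ioo (β - 2 * φ + 2) 2 ∩ Icc 0 β = Ioo (β - 2 * φ + 2) 2 := by
      rw [inter_eq_left]
      intro z hz
      rw [mem_Ioo] at hz
      rw [mem_Icc]
      exact ⟨by linarith [hz.1], by linarith [hz.2]⟩
    have i5 : Ioo (2:ℝ) β ∩ Icc 0 β = Ioo (2:ℝ) β := by
      rw [inter_eq_left]
      intro z hz
      rw [mem_Ioo] at hz
      rw [mem_Icc]
      exact ⟨by linarith [hz.1], by linarith [hz.2]⟩
    rw [i1, i2, i3, i4, i5, measure_empty, mul_zero, zero_add, Real.volume_Ico,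
      Real.volume_Ioo, Real.volume_Ioo, Real.volume_Ioo]
    rw [hfe2]
    have l2 : (0:ℝ) ≤ A * (β * (1 - φ) + 2 - 0) := mul_nonneg hA0.le (by linarith)
    have l3 : (0:ℝ) ≤ A * (β - 2 * φ + 2 - (β * (1 - φ) + 2)) := mul_nonneg hA0.le (by linarith)
    have l4 : (0:ℝ) ≤ φ * A * (2 - (β - 2 * φ + 2)) := mul_nonneg (by positivity) (by linarith)
    have l5 : (0:ℝ) ≤ A * (φ - 1) * (β - 2) := mul_nonneg (by nlinarith) (by linarith)
    rw [← ENNReal.ofReal_mul hA0.le, ← ENNReal.ofReal_mul hA0.le,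
      ← ENNReal.ofReal_mul (by positivity : (0:ℝ) ≤ φ * A),
      ← ENNReal.ofReal_mul (by nlinarith : (0:ℝ) ≤ A * (φ - 1)),
      ← ENNReal.ofReal_add l2 l3, ← ENNReal.ofReal_add (add_nonneg l2 l3) l4,
      ← ENNReal.ofReal_add (add_nonneg (add_nonneg l2 l3) l4) l5]
    congr 1
    linear_combination 2 * A * hφ2
  -- splitting the measure along 0
  have hsplitρ : volume.withDensity ρ = volume.withDensity ρL + volume.withDensity ρR := by
    rw [← withDensity_add_left hLm]
    congr 1
    funext z
    show ρ z = ρL z + ρR z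
    rcases le_or_gt z 0 with h | h
    · rw [hLv z h, hRv' z h, add_zero]
    · rw [hLv' z h, hRv z h, zero_add]
  -- left branch
  have hTLae : T =ᵐ[volume.withDensity ρL] (fun x => x + 2) := by
    have hL0 : (volume.withDensity ρL) (Ioi 0) = 0 := by
      rw [withDensity_apply _ measurableSet_Ioi]
      rw [setLIntegral_congr_fun measurableSet_Ioi
        (fun z (hz : z ∈ Ioi (0:ℝ)) => hLv' z hz)]
      simp
    rw [Filter.EventuallyEq, ae_iff]
    refine measure_mono_null (fun z hz => ?_) hL0
    simp only [mem_setOf_eq] at hz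
    rw [mem_Ioi]
    by_contra h
    push_neg at h
    exact hz (by rw [hT]; simp [h])
  have hmapL : (volume.withDensity ρL).map T = volume.withDensity (fun y => ρL (y - 2)) := by
    rw [Measure.map_congr hTLae]
    have h1 : (fun x : ℝ => x + 2) = ⇑(affEq (-1 : ℝ) 2 (by norm_num)) := by
      funext z; rw [affEq_apply]; ring
    have h2 : ρL = (fun y => ρL (y - 2)) ∘ ⇑(affEq (-1 : ℝ) 2 (by norm_num)) := by
      funext z
      simp only [Function.comp_apply, affEq_apply]
      congr 1
      ring
    rw [h1]
    conv_lhs => rw [h2]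
    rw [map_withDensity_equiv _ _ hgLm, map_volume_affEq]
    norm_num
  -- right branch
  have hTRae : T =ᵐ[volume.withDensity ρR] (fun x => β - φ * x) := by
    have hR0 : (volume.withDensity ρR) (Iic 0) = 0 := by
      rw [withDensity_apply _ measurableSet_Iic]
      rw [setLIntegral_congr_fun measurableSet_Iic
        (fun z (hz : z ∈ Iic (0:ℝ)) => hRv' z hz)]
      simp
    rw [Filter.EventuallyEq, ae_iff]
    refine measure_mono_null (fun z hz => ?_) hR0
    simp only [mem_setOf_eq] at hz
    rw [mem_Iic]
    by_contra h
    push_neg at h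
    exact hz (by rw [hT]; simp [not_le.2 h, le_of_lt h])
  have hmapR : (volume.withDensity ρR).map T =
      volume.withDensity (fun y => ENNReal.ofReal |φ|⁻¹ * ρR ((β - y) / φ)) := by
    rw [Measure.map_congr hTRae]
    have h1 : (fun x : ℝ => β - φ * x) = ⇑(affEq φ β hφne) := by
      funext z; rw [affEq_apply]
    have h2 : ρR = (fun y => ρR ((β - y) / φ)) ∘ ⇑(affEq φ β hφne) := by
      funext z
      simp only [Function.comp_apply, affEq_apply]
      congr 1
      field_simp; ring
    rw [h1]
    conv_lhs => rw [h2]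
    rw [map_withDensity_equiv _ _ hgRm, map_volume_affEq, withDensity_smul_measure,
      ← withDensity_smul' _ _ ENNReal.ofReal_ne_top]
    rfl
  -- pointwise identification of the pushforward density
  have hkey : ∀ x : ℝ, x ∉ ({β * (1 - φ), β - 2 * φ, 0, β * (1 - φ) + 2, β - 2 * φ + 2, 2, β,
      2 * β - 2 * φ} : Set ℝ) →
      ρL (x - 2) + ENNReal.ofReal |φ|⁻¹ * ρR ((β - x) / φ) = ρ x := by
    intro x hx
    simp only [mem_insert_iff, mem_singleton_iff, not_or] at hx
    obtain ⟨hx0, hx1, hxz, hx2, hx3, hx4, hx5, hx6⟩ := hx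
    rcases lt_or_gt_of_ne hx0 with c0 | c0
    · -- x < β(1-φ)
      have hy : β < (β - x) / φ := by rw [lt_div_iff₀ hφ0]; nlinarith
      rw [hLv _ (by linarith), hv0a _ (by linarith), hRv _ (by linarith), hv0b _ hy.le,
        hv0a _ c0.le]
      simp
    · rcases lt_or_gt_of_ne hx1 with c1 | c1
      · -- interval 1
        have hy1 : 2 < (β - x) / φ := by rw [lt_div_iff₀ hφ0]; linarith
        have hy2 : (β - x) / φ < β := by rw [div_lt_iff₀ hφ0]; nlinarith
        rw [hLv _ (by linarith), hv0a _ (by linarith), hRv _ (by linarith), hv5 _ hy1 hy2,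
          hv1 _ c0 c1, zero_add, abs_of_pos hφ0, ← ENNReal.ofReal_mul (by positivity)]
        congr 1
        rw [hiv, hfe2, hfe1]
        linear_combination A * hφ2
      · rcases lt_or_gt_of_ne hxz with cz | cz
        · -- interval 2, negative part
          have hy1 : β - 2 * φ + 2 < (β - x) / φ := by
            rw [lt_div_iff₀ hφ0]; nlinarith [hφ2]
          have hy2 : (β - x) / φ < 2 := by rw [div_lt_iff₀ hφ0]; linarith
          rw [hLv _ (by linarith), hv0a _ (by linarith), hRv _ (by linarith), hv4 _ hy1 hy2,
            hv2 _ c1 (by linarith), zero_add, abs_of_pos hφ0,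
            ← ENNReal.ofReal_mul (by positivity)]
          congr 1
          rw [hiv]
          linear_combination A * hφ2
        · rcases lt_or_gt_of_ne hx2 with c2 | c2
          · -- interval 2, positive part
            have hy1 : β - 2 * φ + 2 < (β - x) / φ := by
              rw [lt_div_iff₀ hφ0]; nlinarith [hφ2]
            have hy2 : (β - x) / φ < 2 := by rw [div_lt_iff₀ hφ0]; linarith
            rw [hLv _ (by linarith), hv0a _ (by linarith), hRv _ (by linarith), hv4 _ hy1 hy2,
              hv2 _ (by linarith) c2, zero_add, abs_of_pos hφ0,
              ← ENNReal.ofReal_mul (by positivity)]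
            congr 1
            rw [hiv]
            linear_combination A * hφ2
          · rcases lt_or_gt_of_ne hx3 with c3 | c3
            · -- interval 3
              have hy1 : β * (1 - φ) + 2 < (β - x) / φ := by
                rw [lt_div_iff₀ hφ0]; nlinarith [hφ2, hbφ2]
              have hy2 : (β - x) / φ < β - 2 * φ + 2 := by
                rw [div_lt_iff₀ hφ0]; nlinarith [hφ2]
              rw [hLv _ (by linarith), hv1 _ (by linarith) (by linarith),
                hRv _ (by linarith [hy1, ho3]), hv3 _ hy1 hy2, hv3 _ c2 c3, abs_of_pos hφ0,
                ← ENNReal.ofReal_mul (by positivity),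
                ← ENNReal.ofReal_add (by positivity) (by positivity)]
              congr 1
              rw [hiv, hfe1]
              ring
            · rcases lt_or_gt_of_ne hx4 with c4 | c4
              · -- interval 4
                have hy0 : 0 < (β - x) / φ := div_pos (by linarith) hφ0
                have hy2 : (β - x) / φ < β - 2 * φ + 2 := by
                  rw [div_lt_iff₀ hφ0]; nlinarith [hφ2]
                have hne : (β - x) / φ ≠ β * (1 - φ) + 2 := by
                  intro hcon
                  apply hx6
                  have h' := (div_eq_iff hφne).1 hcon
                  nlinarith [hbφ2]
                have hReval : ρ ((β - x) / φ) = ENNReal.ofReal A := by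
                  rcases hne.lt_or_gt with d | d
                  · exact hv2 _ (by linarith [hy0]) d
                  · exact hv3 _ d hy2
                rw [hLv _ (by linarith), hv2 _ (by linarith) (by linarith [ho3]), hRv _ hy0,
                  hReval, hv4 _ c3 c4, abs_of_pos hφ0, ← ENNReal.ofReal_mul (by positivity),
                  ← ENNReal.ofReal_add hA0.le (by positivity)]
                congr 1
                rw [hiv]
                ring
              · rcases lt_or_gt_of_ne hx5 with c5 | c5
                · -- interval 5
                  have hy0 : 0 < (β - x) / φ := div_pos (by linarith) hφ0
                  have hy2 : (β - x) / φ < β - 2 * φ + 2 := by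
                    rw [div_lt_iff₀ hφ0]; nlinarith [hφ2]
                  have hne : (β - x) / φ ≠ β * (1 - φ) + 2 := by
                    intro hcon
                    apply hx6
                    have h' := (div_eq_iff hφne).1 hcon
                    nlinarith [hbφ2]
                  have hReval : ρ ((β - x) / φ) = ENNReal.ofReal A := by
                    rcases hne.lt_or_gt with d | d
                    · exact hv2 _ (by linarith [hy0]) d
                    · exact hv3 _ d hy2
                  rw [hLv' _ (by linarith), hRv _ hy0, hReval, hv5 _ c4 c5, zero_add,
                    abs_of_pos hφ0, ← ENNReal.ofReal_mul (by positivity)]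
                  congr 1
                  rw [hiv, hfe2]
                  ring
                · -- x > β
                  have hyn : (β - x) / φ ≤ 0 :=
                    div_nonpos_of_nonpos_of_nonneg (by linarith) hφ0.le
                  rw [hLv' _ (by linarith), hRv' _ hyn, hv0b _ c5.le]
                  simp
  have hgae : ((fun y => ρL (y - 2)) +
      fun y => ENNReal.ofReal |φ|⁻¹ * ρR ((β - y) / φ)) =ᵐ[volume] ρ := by
    have hEnull : volume ({β * (1 - φ), β - 2 * φ, 0, β * (1 - φ) + 2, β - 2 * φ + 2, 2, β,
        2 * β - 2 * φ} : Set ℝ) = 0 := (Set.toFinite _).measure_zero _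
    rw [Filter.EventuallyEq, ae_iff]
    refine measure_mono_null (fun x hx => ?_) hEnull
    simp only [mem_setOf_eq, Pi.add_apply] at hx
    by_contra hxE
    exact hx (hkey x hxE)
  have hfinal : (volume.withDensity ρ).map T = volume.withDensity ρ := by
    conv_lhs => rw [hsplitρ]
    rw [Measure.map_add _ _ hTm, hmapL, hmapR, ← withDensity_add_left hgLm]
    exact withDensity_congr_ae hgae
  refine ⟨⟨by rw [hμ]; exact huniv⟩, by rw [hμ]; exact hfinal, by rw [hμ]; exact hIcc⟩
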